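/- SL and BSL are equiexpressive: for every SL sentence φ there is a BSL sentence φ' (namely tr(φ)) such that for all CGS G, G ⊨_SL φ iff G ⊨_BSL φ'; and for every BSL sentence φ there is an SL sentence φ' (namely tr_Ag(φ)) such that for all CGS G, G ⊨_BSL φ iff G ⊨_SL φ'. -/

import Mathlib

/-- A concurrent game structure: transition function, initial state, valuation. -/
structure CGS (S Ag Act AP : Type) where
  δ : S → (Ag → Act) → S
  init : S
  val : S → AP → Prop

variable {S Ag Act AP Var : Type}

/-- An initial (finite) path: a start state together with the list of decisions taken. -/
abbrev FPath (S Ag Act : Type) := S × List (Ag → Act)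

/-- Last state of an initial path. -/
def CGS.lastState (G : CGS S Ag Act AP) (ρ : FPath S Ag Act) : S :=
  ρ.2.foldl G.δ ρ.1

/-- A strategy assigns an action to every initial path. -/
abbrev Strat (S Ag Act : Type) := FPath S Ag Act → Act

/-- Concatenation of initial paths (meaningful when `G.lastState ρ = ρ'.1`,
i.e. they are glued at the shared state). -/
def FPath.concat (ρ ρ' : FPath S Ag Act) : FPath S Ag Act := (ρ.1, ρ.2 ++ ρ'.2)

/-- The finite prefix with `n` decisions of the play from `q` whose decision stream is `d`. -/
def prefixPath (q : S) (d : ℕ → Ag → Act) (n : ℕ) : FPath S Ag Act :=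
  (q, List.ofFn fun i : Fin n => d i)

/-- The state reached after `i` steps of the play from `q` with decision stream `d`. -/
def stateAt (G : CGS S Ag Act AP) (q : S) (d : ℕ → Ag → Act) (i : ℕ) : S :=
  G.lastState (prefixPath q d i)

/-- An assignment: a partial map from agents and variables to strategies. -/
abbrev Assign (S Ag Act Var : Type) := Ag ⊕ Var → Option (Strat S Ag Act)

/-- The outcome of an assignment from a state: the set of plays (identified with
their decision streams) compatible with all strategies assigned to agents. -/
def outcome (G : CGS S Ag Act AP) (q : S) (χ : Assign S Ag Act Var) :
    Set (ℕ → Ag → Act) :=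
  {d | ∀ (k : ℕ) (a : Ag) (σ : Strat S Ag Act),
      χ (Sum.inl a) = some σ → d k a = σ (prefixPath q d k)}

/-- The `ρ`-translation of a strategy. -/
def transStrat [DecidableEq S] (G : CGS S Ag Act AP) (ρ : FPath S Ag Act)
    (σ : Strat S Ag Act) : Strat S Ag Act :=
  fun ρ' => if ρ'.1 = G.lastState ρ then σ (ρ.concat ρ') else σ ρ'

/-- The `ρ`-translation of an assignment. -/
def transAssign [DecidableEq S] (G : CGS S Ag Act AP) (ρ : FPath S Ag Act)
    (χ : Assign S Ag Act Var) : Assign S Ag Act Var :=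
  fun l => (χ l).map (transStrat G ρ)

/-- Syntax of Strategy Logic (SL). -/
inductive SLForm (AP Ag Var : Type) : Type where
  | atom : AP → SLForm AP Ag Var
  | neg  : SLForm AP Ag Var → SLForm AP Ag Var
  | or   : SLForm AP Ag Var → SLForm AP Ag Var → SLForm AP Ag Var
  | next : SLForm AP Ag Var → SLForm AP Ag Var
  | untl : SLForm AP Ag Var → SLForm AP Ag Var → SLForm AP Ag Var
  | exi  : Var → SLForm AP Ag Var → SLForm AP Ag Var
  | bind : Ag → Var → SLForm AP Ag Var → SLForm AP Ag Var

mutual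
/-- State formulas of Branching-time Strategy Logic (BSL). -/
inductive BSLForm (AP Ag Var : Type) : Type where
  | atom : AP → BSLForm AP Ag Var
  | neg  : BSLForm AP Ag Var → BSLForm AP Ag Var
  | or   : BSLForm AP Ag Var → BSLForm AP Ag Var → BSLForm AP Ag Var
  | exi  : Var → BSLForm AP Ag Var → BSLForm AP Ag Var
  | bind : Ag → Var → BSLForm AP Ag Var → BSLForm AP Ag Var
  | unbind : Ag → BSLForm AP Ag Var → BSLForm AP Ag Var
  | pathE : BSLPath AP Ag Var → BSLForm AP Ag Var
/-- Path formulas of BSL. -/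
inductive BSLPath (AP Ag Var : Type) : Type where
  | state : BSLForm AP Ag Var → BSLPath AP Ag Var
  | neg   : BSLPath AP Ag Var → BSLPath AP Ag Var
  | or    : BSLPath AP Ag Var → BSLPath AP Ag Var → BSLPath AP Ag Var
  | next  : BSLPath AP Ag Var → BSLPath AP Ag Var
  | untl  : BSLPath AP Ag Var → BSLPath AP Ag Var → BSLPath AP Ag Var
end

/-- Semantics of SL. Temporal operators are evaluated on an outcome play of the
current assignment (for complete assignments — the only case where the SL
semantics is defined — this play is unique), with the assignment translated
along the play. -/
def SLsat [DecidableEq S] [DecidableEq Ag] [DecidableEq Var] (G : CGS S Ag Act AP) :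
    Assign S Ag Act Var → S → SLForm AP Ag Var → Prop
  | χ, q, .atom p => G.val q p
  | χ, q, .neg φ => ¬ SLsat G χ q φ
  | χ, q, .or φ φ' => SLsat G χ q φ ∨ SLsat G χ q φ'
  | χ, q, .exi x φ =>
      ∃ σ : Strat S Ag Act, SLsat G (Function.update χ (Sum.inr x) (some σ)) q φ
  | χ, q, .bind a x φ => SLsat G (Function.update χ (Sum.inl a) (χ (Sum.inr x))) q φ
  | χ, q, .next φ => ∃ d ∈ outcome G q χ,
      SLsat G (transAssign G (prefixPath q d 1) χ) (stateAt G q d 1) φ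
  | χ, q, .untl φ φ' => ∃ d ∈ outcome G q χ, ∃ j : ℕ,
      SLsat G (transAssign G (prefixPath q d j) χ) (stateAt G q d j) φ' ∧
      ∀ k < j, SLsat G (transAssign G (prefixPath q d k) χ) (stateAt G q d k) φ

mutual
/-- Semantics of BSL state formulas, at a state under an assignment. -/
def BSLsat [DecidableEq S] [DecidableEq Ag] [DecidableEq Var] (G : CGS S Ag Act AP)
    (χ : Assign S Ag Act Var) (q : S) : BSLForm AP Ag Var → Prop
  | .atom p => G.val q p
  | .neg φ => ¬ BSLsat G χ q φ
  | .or φ φ' => BSLsat G χ q φ ∨ BSLsat G χ q φ'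
  | .exi x φ =>
      ∃ σ : Strat S Ag Act, BSLsat G (Function.update χ (Sum.inr x) (some σ)) q φ
  | .bind a x φ => BSLsat G (Function.update χ (Sum.inl a) (χ (Sum.inr x))) q φ
  | .unbind a φ => BSLsat G (Function.update χ (Sum.inl a) none) q φ
  | .pathE ψ => ∃ d ∈ outcome G q χ, BSLsatP G χ q d 0 ψ

/-- Semantics of BSL path formulas, on the play from `q` with decision stream
`d`, at position `i`; the assignment is translated by the prefix as state
formulas are evaluated. -/
def BSLsatP [DecidableEq S] [DecidableEq Ag] [DecidableEq Var] (G : CGS S Ag Act AP)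
    (χ : Assign S Ag Act Var) (q : S) (d : ℕ → Ag → Act) (i : ℕ) :
    BSLPath AP Ag Var → Prop
  | .state φ => BSLsat G (transAssign G (prefixPath q d i) χ) (stateAt G q d i) φ
  | .neg ψ => ¬ BSLsatP G χ q d i ψ
  | .or ψ ψ' => BSLsatP G χ q d i ψ ∨ BSLsatP G χ q d i ψ'
  | .next ψ => BSLsatP G χ q d (i + 1) ψ
  | .untl ψ ψ' => ∃ j, i ≤ j ∧ BSLsatP G χ q d j ψ' ∧
      ∀ k, i ≤ k → k < j → BSLsatP G χ q d k ψ
end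

/-- Free variables of an SL formula. -/
def SLfree : SLForm AP Ag Var → Set Var
  | .atom _ => ∅
  | .neg φ => SLfree φ
  | .or φ φ' => SLfree φ ∪ SLfree φ'
  | .next φ => SLfree φ
  | .untl φ φ' => SLfree φ ∪ SLfree φ'
  | .exi x φ => SLfree φ \ {x}
  | .bind _ x φ => insert x (SLfree φ)

mutual
/-- Free variables of a BSL state formula. -/
def BSLfree : BSLForm AP Ag Var → Set Var
  | .atom _ => ∅
  | .neg φ => BSLfree φ
  | .or φ φ' => BSLfree φ ∪ BSLfree φ'
  | .exi x φ => BSLfree φ \ {x}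
  | .bind _ x φ => insert x (BSLfree φ)
  | .unbind _ φ => BSLfree φ
  | .pathE ψ => BSLfreeP ψ
/-- Free variables of a BSL path formula. -/
def BSLfreeP : BSLPath AP Ag Var → Set Var
  | .state φ => BSLfree φ
  | .neg ψ => BSLfreeP ψ
  | .or ψ ψ' => BSLfreeP ψ ∪ BSLfreeP ψ'
  | .next ψ => BSLfreeP ψ
  | .untl ψ ψ' => BSLfreeP ψ ∪ BSLfreeP ψ'
end

/-- `SLdefFor A φ` holds when the SL semantics of `φ` is defined in every
assignment whose agent-domain is `A`: every temporal operator is only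
evaluated under a complete assignment (every agent being bound on the way). -/
def SLdefFor (A : Set Ag) : SLForm AP Ag Var → Prop
  | .atom _ => True
  | .neg φ => SLdefFor A φ
  | .or φ φ' => SLdefFor A φ ∧ SLdefFor A φ'
  | .exi _ φ => SLdefFor A φ
  | .bind a _ φ => SLdefFor (insert a A) φ
  | .next φ => A = Set.univ ∧ SLdefFor A φ
  | .untl φ φ' => A = Set.univ ∧ SLdefFor A φ ∧ SLdefFor A φ'

/-- The translation `tr : SL → BSL`, inserting a path quantifier in front of
each temporal operator and homomorphic elsewhere. -/
def tr : SLForm AP Ag Var → BSLForm AP Ag Var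
  | .atom p => .atom p
  | .neg φ => .neg (tr φ)
  | .or φ φ' => .or (tr φ) (tr φ')
  | .next φ => .pathE (.next (.state (tr φ)))
  | .untl φ φ' => .pathE (.untl (.state (tr φ)) (.state (tr φ')))
  | .exi x φ => .exi x (tr φ)
  | .bind a x φ => .bind a x (tr φ)

mutual
/-- `φ` avoids the fresh variables (those of the form `Sum.inr a`) used by the
translation `tr_A`. -/
def BSLavoidsFresh : BSLForm AP Ag (Var ⊕ Ag) → Prop
  | .atom _ => True
  | .neg φ => BSLavoidsFresh φ
  | .or φ φ' => BSLavoidsFresh φ ∧ BSLavoidsFresh φ'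
  | .exi x φ => x.isLeft ∧ BSLavoidsFresh φ
  | .bind _ x φ => x.isLeft ∧ BSLavoidsFresh φ
  | .unbind _ φ => BSLavoidsFresh φ
  | .pathE ψ => BSLavoidsFreshP ψ
def BSLavoidsFreshP : BSLPath AP Ag (Var ⊕ Ag) → Prop
  | .state φ => BSLavoidsFresh φ
  | .neg ψ => BSLavoidsFreshP ψ
  | .or ψ ψ' => BSLavoidsFreshP ψ ∧ BSLavoidsFreshP ψ'
  | .next ψ => BSLavoidsFreshP ψ
  | .untl ψ ψ' => BSLavoidsFreshP ψ ∧ BSLavoidsFreshP ψ'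
end

/-- Prefix a formula with the bindings `(a, x_a)` for all agents `a` in `l`. -/
def bindList (l : List Ag) (φ : SLForm AP Ag (Var ⊕ Ag)) : SLForm AP Ag (Var ⊕ Ag) :=
  l.foldr (fun a ψ => .bind a (Sum.inr a) ψ) φ

/-- Prefix a formula with the strategy quantifications `⟨⟨x_a⟩⟩` for `a ∈ l`. -/
def quantList (l : List Ag) (φ : SLForm AP Ag (Var ⊕ Ag)) : SLForm AP Ag (Var ⊕ Ag) :=
  l.foldr (fun a ψ => .exi (Sum.inr a) ψ) φ

noncomputable section

mutual
/-- The translation `tr_A : BSL → SL`, parameterized by the set `A` of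
currently unbound agents; each fresh variable for agent `a` is `Sum.inr a`. -/
def trA [DecidableEq Ag] (A : Finset Ag) :
    BSLForm AP Ag (Var ⊕ Ag) → SLForm AP Ag (Var ⊕ Ag)
  | .atom p => .atom p
  | .neg φ => .neg (trA A φ)
  | .or φ φ' => .or (trA A φ) (trA A φ')
  | .exi x φ => .exi x (trA A φ)
  | .bind a x φ => .bind a x (trA (A.erase a) φ)
  | .unbind a φ => trA (insert a A) φ
  | .pathE ψ => quantList A.toList (bindList A.toList (trAP A ψ))
/-- The homomorphic extension of `tr_A` to BSL path formulas. -/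
def trAP [DecidableEq Ag] (A : Finset Ag) :
    BSLPath AP Ag (Var ⊕ Ag) → SLForm AP Ag (Var ⊕ Ag)
  | .state φ => trA A φ
  | .neg ψ => .neg (trAP A ψ)
  | .or ψ ψ' => .or (trAP A ψ) (trAP A ψ')
  | .next ψ => .next (trAP A ψ)
  | .untl ψ ψ' => .untl (trAP A ψ) (trAP A ψ')
end
end

/-- The empty assignment. -/
def emptyAssign : Assign S Ag Act Var := fun _ => none
section Aux
set_option linter.unusedSectionVars false
set_option linter.unusedVariables false
variable [DecidableEq S] [DecidableEq Ag] [DecidableEq Var]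

lemma prefixPath_zero (q : S) (d : ℕ → Ag → Act) : prefixPath q d 0 = (q, []) := by
  simp [prefixPath]

lemma stateAt_zero (G : CGS S Ag Act AP) (q : S) (d : ℕ → Ag → Act) :
    stateAt G q d 0 = q := by
  simp [stateAt, prefixPath, CGS.lastState]

lemma transStrat_nil (G : CGS S Ag Act AP) (q : S) :
    transStrat G (q, ([] : List (Ag → Act))) = id := by
  funext σ ρ
  simp only [id]
  unfold transStrat CGS.lastState FPath.concat
  simp only [List.foldl_nil, List.nil_append]
  by_cases h : ρ.1 = q
  · exact (if_pos h).trans (congrArg σ (show ((q, ρ.2) : FPath S Ag Act) = ρ by rw [← h]))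
  · exact if_neg h

lemma transAssign_nil (G : CGS S Ag Act AP) (q : S) (χ : Assign S Ag Act Var) :
    transAssign G (q, []) χ = χ := by
  funext l
  unfold transAssign
  rw [transStrat_nil]
  cases χ l <;> rfl

lemma prefixPath_concat (G : CGS S Ag Act AP) (q : S) (d : ℕ → Ag → Act) (i j : ℕ) :
    FPath.concat (prefixPath q d i) (prefixPath (stateAt G q d i) (fun k => d (i + k)) j)
      = prefixPath q d (i + j) := by
  unfold FPath.concat prefixPath
  have h := List.ofFn_add (f := fun t : Fin (i+j) => d (t : ℕ))
  simp only [h]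
  congr 1

lemma lastState_concat (G : CGS S Ag Act AP) (ρ ρ' : FPath S Ag Act)
    (h : ρ'.1 = G.lastState ρ) : G.lastState (ρ.concat ρ') = G.lastState ρ' := by
  unfold CGS.lastState FPath.concat at *
  rw [List.foldl_append, ← h]

lemma stateAt_add (G : CGS S Ag Act AP) (q : S) (d : ℕ → Ag → Act) (i j : ℕ) :
    stateAt G (stateAt G q d i) (fun k => d (i + k)) j = stateAt G q d (i + j) := by
  have h := lastState_concat G (prefixPath q d i)
    (prefixPath (stateAt G q d i) (fun k => d (i + k)) j) rfl
  rw [prefixPath_concat] at h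
  exact h.symm

/-- Direction 1: `tr` preserves satisfaction under any assignment. -/
lemma sat_tr (G : CGS S Ag Act AP) (φ : SLForm AP Ag Var) :
    ∀ χ q, SLsat G χ q φ ↔ BSLsat G χ q (tr φ) := by
  induction φ with
  | atom p => intro χ q; simp [SLsat, tr, BSLsat]
  | neg φ ih => intro χ q; simp only [SLsat, tr, BSLsat]; rw [ih]
  | or φ φ' ih ih' => intro χ q; simp only [SLsat, tr, BSLsat]; rw [ih, ih']
  | exi x φ ih => intro χ q; simp only [SLsat, tr, BSLsat]; exact exists_congr fun σ => ih _ _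
  | bind a x φ ih => intro χ q; simp only [SLsat, tr, BSLsat]; exact ih _ _
  | next φ ih =>
      intro χ q
      simp only [SLsat, tr, BSLsat, BSLsatP]
      exact exists_congr fun d => and_congr_right fun _ => ih _ _
  | untl φ φ' ih ih' =>
      intro χ q
      simp only [SLsat, tr, BSLsat, BSLsatP]
      refine exists_congr fun d => and_congr_right fun _ => exists_congr fun j => ?_
      constructor
      · rintro ⟨h1, h2⟩
        exact ⟨Nat.zero_le _, (ih' _ _).1 h1, fun k _ hk => (ih _ _).1 (h2 k hk)⟩
      · rintro ⟨_, h1, h2⟩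
        exact ⟨(ih' _ _).2 h1, fun k hk => (ih _ _).2 (h2 k (Nat.zero_le _) hk)⟩

lemma BSLfree_tr (φ : SLForm AP Ag Var) : BSLfree (tr φ) = SLfree φ := by
  induction φ <;> simp_all [tr, BSLfree, BSLfreeP, SLfree]

end Aux

section Aux2
set_option linter.unusedSectionVars false
set_option linter.unusedVariables false
variable [DecidableEq S] [DecidableEq Ag] [DecidableEq Var]

/-- Two assignments agree as partial maps, with strategies agreeing on paths from `q`. -/
def AEq (q : S) (χ χ' : Assign S Ag Act Var) : Prop :=
  ∀ l, (χ l = none ∧ χ' l = none) ∨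
    ∃ σ σ', χ l = some σ ∧ χ' l = some σ' ∧
      ∀ ρ : FPath S Ag Act, ρ.1 = q → σ ρ = σ' ρ

lemma AEq.refl (q : S) (χ : Assign S Ag Act Var) : AEq q χ χ := by
  intro l
  cases h : χ l with
  | none => exact Or.inl ⟨rfl, rfl⟩
  | some σ => exact Or.inr ⟨σ, σ, rfl, rfl, fun _ _ => rfl⟩

lemma outcome_AEq (G : CGS S Ag Act AP) {q : S} {χ χ' : Assign S Ag Act Var}
    (h : AEq q χ χ') : outcome G q χ = outcome G q χ' := by
  ext d
  simp only [outcome, Set.mem_setOf_eq]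
  constructor <;> intro hd k a σ hσ
  · rcases h (Sum.inl a) with ⟨h1, h2⟩ | ⟨σ1, σ2, h1, h2, h3⟩
    · rw [hσ] at h2; cases h2
    · rw [hσ] at h2; cases h2
      rw [hd k a σ1 h1]
      exact h3 _ rfl
  · rcases h (Sum.inl a) with ⟨h1, h2⟩ | ⟨σ1, σ2, h1, h2, h3⟩
    · rw [hσ] at h1; cases h1
    · rw [hσ] at h1; cases h1
      rw [hd k a σ2 h2]
      exact (h3 _ rfl).symm

lemma AEq.update {q : S} {χ χ' : Assign S Ag Act Var} (h : AEq q χ χ')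
    (l₀ : Ag ⊕ Var) {v v' : Option (Strat S Ag Act)}
    (hv : (v = none ∧ v' = none) ∨
      ∃ σ σ', v = some σ ∧ v' = some σ' ∧ ∀ ρ : FPath S Ag Act, ρ.1 = q → σ ρ = σ' ρ) :
    AEq q (Function.update χ l₀ v) (Function.update χ' l₀ v') := by
  intro l
  by_cases hl : l = l₀
  · subst hl; simpa [Function.update_self] using hv
  · simpa [Function.update_of_ne hl] using h l

lemma AEq.push (G : CGS S Ag Act AP) {q : S} {χ χ' : Assign S Ag Act Var}
    (h : AEq q χ χ') (d : ℕ → Ag → Act) (i : ℕ) :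
    AEq (stateAt G q d i) (transAssign G (prefixPath q d i) χ)
      (transAssign G (prefixPath q d i) χ') := by
  intro l
  rcases h l with ⟨h1, h2⟩ | ⟨σ, σ', h1, h2, h3⟩
  · left
    unfold transAssign
    rw [h1, h2]
    exact ⟨rfl, rfl⟩
  · right
    refine ⟨transStrat G (prefixPath q d i) σ, transStrat G (prefixPath q d i) σ',
      by unfold transAssign; rw [h1]; rfl, by unfold transAssign; rw [h2]; rfl, ?_⟩
    intro ρ hρ
    have hρ' : ρ.1 = G.lastState (prefixPath q d i) := hρ
    simp only [transStrat, if_pos hρ']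
    exact h3 _ rfl

lemma SLsat_congr (G : CGS S Ag Act AP) (φ : SLForm AP Ag Var) :
    ∀ (q : S) (χ χ' : Assign S Ag Act Var), AEq q χ χ' →
      (SLsat G χ q φ ↔ SLsat G χ' q φ) := by
  induction φ with
  | atom p => intro q χ χ' h; simp [SLsat]
  | neg φ ih => intro q χ χ' h; simp only [SLsat]; rw [ih q χ χ' h]
  | or φ φ' ih ih' => intro q χ χ' h; simp only [SLsat]; rw [ih q χ χ' h, ih' q χ χ' h]
  | exi x φ ih =>
      intro q χ χ' h
      simp only [SLsat]
      exact exists_congr fun σ => ih q _ _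
        (h.update _ (Or.inr ⟨σ, σ, rfl, rfl, fun _ _ => rfl⟩))
  | bind a x φ ih =>
      intro q χ χ' h
      simp only [SLsat]
      exact ih q _ _ (h.update _ (h (Sum.inr x)))
  | next φ ih =>
      intro q χ χ' h
      simp only [SLsat]
      rw [outcome_AEq G h]
      exact exists_congr fun d => and_congr_right fun _ =>
        ih _ _ _ (h.push G d 1)
  | untl φ φ' ih ih' =>
      intro q χ χ' h
      simp only [SLsat]
      rw [outcome_AEq G h]
      refine exists_congr fun d => and_congr_right fun _ => exists_congr fun j =>
        and_congr (ih' _ _ _ (h.push G d j)) ?_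
      exact forall_congr' fun k => forall_congr' fun _ => ih _ _ _ (h.push G d k)

lemma FPath.concat_assoc (ρ ρ' ρ'' : FPath S Ag Act) :
    (ρ.concat ρ').concat ρ'' = ρ.concat (ρ'.concat ρ'') := by
  simp [FPath.concat, List.append_assoc]

/-- Composition of translations, up to `AEq` at the reached state. -/
lemma AEq_comp (G : CGS S Ag Act AP) (q : S) (d : ℕ → Ag → Act) (i j : ℕ)
    (χ : Assign S Ag Act Var) :
    AEq (stateAt G q d (i + j))
      (transAssign G (prefixPath (stateAt G q d i) (fun k => d (i + k)) j)
        (transAssign G (prefixPath q d i) χ))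
      (transAssign G (prefixPath q d (i + j)) χ) := by
  intro l
  cases hχ : χ l with
  | none => left; unfold transAssign; rw [hχ]; exact ⟨rfl, rfl⟩
  | some σ =>
      right
      refine ⟨_, _,
        by unfold transAssign; rw [hχ]; rfl,
        by unfold transAssign; rw [hχ]; rfl, ?_⟩
      intro ρ hρ
      have h1 : ρ.1 = G.lastState (prefixPath (stateAt G q d i) (fun k => d (i + k)) j) := by
        rw [hρ, ← stateAt_add G q d i j]; rfl
      have h2 : ρ.1 = G.lastState (prefixPath q d (i + j)) := hρ
      simp only [transStrat, if_pos h1, if_pos h2]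
      have h3 : ((prefixPath (stateAt G q d i) (fun k => d (i + k)) j).concat ρ).1
          = G.lastState (prefixPath q d i) := rfl
      simp only [if_pos h3]
      rw [← FPath.concat_assoc, prefixPath_concat]

/-- A play in the outcome remains in the outcome of the translated assignment. -/
lemma outcome_shift (G : CGS S Ag Act AP) {q : S} {χ : Assign S Ag Act Var}
    {d : ℕ → Ag → Act} (hd : d ∈ outcome G q χ) (i : ℕ) :
    (fun k => d (i + k)) ∈ outcome G (stateAt G q d i) (transAssign G (prefixPath q d i) χ) := by
  intro k a σ hσ
  simp only [transAssign, Option.map_eq_some_iff] at hσ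
  obtain ⟨σ₀, hσ₀, rfl⟩ := hσ
  have h1 : (prefixPath (stateAt G q d i) (fun k => d (i + k)) k).1
      = G.lastState (prefixPath q d i) := rfl
  simp only [transStrat, if_pos h1]
  rw [prefixPath_concat]
  exact hd (i + k) a σ₀ hσ₀

/-- Complete assignments have at most one outcome play. -/
lemma outcome_unique (G : CGS S Ag Act AP) {q : S} {χ : Assign S Ag Act Var}
    (hc : ∀ a, (χ (Sum.inl a)).isSome) {d d' : ℕ → Ag → Act}
    (hd : d ∈ outcome G q χ) (hd' : d' ∈ outcome G q χ) : d = d' := by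
  have H : ∀ k, d k = d' k := by
    intro k
    induction k using Nat.strong_induction_on with
    | _ k ih =>
        have hpre : prefixPath (Ag := Ag) (Act := Act) q d k = prefixPath q d' k := by
          unfold prefixPath
          have he : (fun i : Fin k => d i) = fun i : Fin k => d' i := by
            funext i
            exact ih i i.2
          rw [he]
        funext a
        obtain ⟨σ, hσ⟩ := Option.isSome_iff_exists.1 (hc a)
        rw [hd k a σ hσ, hd' k a σ hσ, hpre]
  funext k
  exact H k

/-- Prefixes of the canonical play of a complete assignment. -/
noncomputable def mkPre (χ : Assign S Ag Act Var) (q : S)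
    (h : ∀ a, (χ (Sum.inl a)).isSome) : ℕ → List (Ag → Act) :=
  fun n => Nat.rec [] (fun _ l => l ++ [fun a => (χ (Sum.inl a)).get (h a) (q, l)]) n

/-- The canonical play of a complete assignment. -/
noncomputable def mkPlay (χ : Assign S Ag Act Var) (q : S)
    (h : ∀ a, (χ (Sum.inl a)).isSome) : ℕ → Ag → Act :=
  fun k a => (χ (Sum.inl a)).get (h a) (q, mkPre χ q h k)

lemma mkPre_eq (χ : Assign S Ag Act Var) (q : S) (h : ∀ a, (χ (Sum.inl a)).isSome) (k : ℕ) :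
    prefixPath q (mkPlay χ q h) k = (q, mkPre χ q h k) := by
  induction k with
  | zero => simp [prefixPath, mkPre]
  | succ k ih =>
      unfold prefixPath at ih ⊢
      simp only [Prod.mk.injEq, true_and] at ih ⊢
      rw [List.ofFn_succ', List.concat_eq_append]
      simp only [Fin.coe_castSucc, Fin.val_last]
      rw [ih]
      rfl

lemma mkPlay_mem (G : CGS S Ag Act AP) (χ : Assign S Ag Act Var) (q : S)
    (h : ∀ a, (χ (Sum.inl a)).isSome) : mkPlay χ q h ∈ outcome G q χ := by
  intro k a σ hσ
  rw [mkPre_eq]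
  show (χ (Sum.inl a)).get (h a) (q, mkPre χ q h k) = _
  have h2 : some ((χ (Sum.inl a)).get (h a)) = some σ := by rw [Option.some_get, hσ]
  rw [Option.some.inj h2]

end Aux2

section Aux3
set_option linter.unusedSectionVars false
set_option linter.unusedVariables false
variable [DecidableEq S] [DecidableEq Ag] [DecidableEq Var]

/-- Update fresh variables `x_a`, `a ∈ l`, to `f a`. -/
def updQ (χ : Assign S Ag Act (Var ⊕ Ag)) (l : List Ag) (f : Ag → Strat S Ag Act) :
    Assign S Ag Act (Var ⊕ Ag) :=
  fun x => match x with
  | Sum.inr (Sum.inr a) => if a ∈ l then some (f a) else χ x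
  | x => χ x

/-- Update agents `a ∈ l` to `f a`. -/
def agUpd (χ : Assign S Ag Act (Var ⊕ Ag)) (l : List Ag) (f : Ag → Strat S Ag Act) :
    Assign S Ag Act (Var ⊕ Ag) :=
  fun x => match x with
  | Sum.inl a => if a ∈ l then some (f a) else χ x
  | x => χ x

/-- Update agents and fresh variables of `l` to `f`. -/
def bigUpd (χ : Assign S Ag Act (Var ⊕ Ag)) (l : List Ag) (f : Ag → Strat S Ag Act) :
    Assign S Ag Act (Var ⊕ Ag) :=
  agUpd (updQ χ l f) l f

lemma updQ_nil (χ : Assign S Ag Act (Var ⊕ Ag)) (f : Ag → Strat S Ag Act) :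
    updQ χ [] f = χ := by
  funext x
  rcases x with b | (v | b) <;> rfl

lemma agUpd_nil (χ : Assign S Ag Act (Var ⊕ Ag)) (f : Ag → Strat S Ag Act) :
    agUpd χ [] f = χ := by
  funext x
  rcases x with b | (v | b) <;> rfl

lemma updQ_cons (χ : Assign S Ag Act (Var ⊕ Ag)) (l : List Ag) (f : Ag → Strat S Ag Act)
    (a : Ag) :
    updQ χ (a :: l) f = updQ (Function.update χ (Sum.inr (Sum.inr a)) (some (f a))) l f := by
  funext x
  rcases x with b | (v | b)
  · show _ = Function.update χ (Sum.inr (Sum.inr a)) (some (f a)) (Sum.inl b)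
    rw [Function.update_of_ne (by simp)]
    rfl
  · show _ = Function.update χ (Sum.inr (Sum.inr a)) (some (f a)) (Sum.inr (Sum.inl v))
    rw [Function.update_of_ne (by simp)]
    rfl
  · show (if b ∈ a :: l then some (f b) else χ (Sum.inr (Sum.inr b)))
      = (if b ∈ l then some (f b)
          else Function.update χ (Sum.inr (Sum.inr a)) (some (f a)) (Sum.inr (Sum.inr b)))
    by_cases hb : b ∈ l
    · simp [hb, List.mem_cons]
    · by_cases hba : b = a
      · subst hba
        simp [hb, Function.update_self]
      · simp [hb, hba, Function.update_of_ne (by simp [hba] : (Sum.inr (Sum.inr b) : Ag ⊕ (Var ⊕ Ag)) ≠ Sum.inr (Sum.inr a))]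

lemma updQ_cons' (χ : Assign S Ag Act (Var ⊕ Ag)) (l : List Ag) (f : Ag → Strat S Ag Act)
    (a : Ag) (σ : Strat S Ag Act) (ha : a ∉ l) :
    updQ (Function.update χ (Sum.inr (Sum.inr a)) (some σ)) l f
      = updQ χ (a :: l) (Function.update f a σ) := by
  funext x
  rcases x with b | (v | b)
  · show (Function.update χ (Sum.inr (Sum.inr a)) (some σ)) (Sum.inl b) = χ (Sum.inl b)
    exact Function.update_of_ne (by simp) _ _
  · show (Function.update χ (Sum.inr (Sum.inr a)) (some σ)) (Sum.inr (Sum.inl v))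
      = χ (Sum.inr (Sum.inl v))
    exact Function.update_of_ne (by simp) _ _
  · show (if b ∈ l then some (f b)
        else Function.update χ (Sum.inr (Sum.inr a)) (some σ) (Sum.inr (Sum.inr b)))
      = (if b ∈ a :: l then some (Function.update f a σ b) else χ (Sum.inr (Sum.inr b)))
    by_cases hb : b ∈ l
    · have hba : b ≠ a := fun h => ha (h ▸ hb)
      rw [if_pos hb, if_pos (List.mem_cons_of_mem a hb), Function.update_of_ne hba]
    · by_cases hba : b = a
      · subst hba
        rw [if_neg hb, if_pos (List.mem_cons_self), Function.update_self,
          Function.update_self]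
      · rw [if_neg hb, if_neg (by simp [hba, hb]),
          Function.update_of_ne (by simp [hba] : (Sum.inr (Sum.inr b) : Ag ⊕ (Var ⊕ Ag)) ≠ _)]

lemma agUpd_cons (χ : Assign S Ag Act (Var ⊕ Ag)) (l : List Ag) (f : Ag → Strat S Ag Act)
    (a : Ag) :
    agUpd χ (a :: l) f = agUpd (Function.update χ (Sum.inl a) (some (f a))) l f := by
  funext x
  rcases x with b | (v | b)
  · show (if b ∈ a :: l then some (f b) else χ (Sum.inl b))
      = (if b ∈ l then some (f b) else Function.update χ (Sum.inl a) (some (f a)) (Sum.inl b))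
    by_cases hb : b ∈ l
    · simp [hb, List.mem_cons]
    · by_cases hba : b = a
      · subst hba; simp [hb, Function.update_self]
      · simp [hb, hba, Function.update_of_ne
          (by simp [hba] : (Sum.inl b : Ag ⊕ (Var ⊕ Ag)) ≠ Sum.inl a)]
  · show _ = Function.update χ (Sum.inl a) (some (f a)) (Sum.inr (Sum.inl v))
    rw [Function.update_of_ne (by simp)]
    rfl
  · show _ = Function.update χ (Sum.inl a) (some (f a)) (Sum.inr (Sum.inr b))
    rw [Function.update_of_ne (by simp)]
    rfl

lemma quantList_sat_fwd (G : CGS S Ag Act AP) (q : S) (θ : SLForm AP Ag (Var ⊕ Ag))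
    (f : Ag → Strat S Ag Act) :
    ∀ (l : List Ag) (χ : Assign S Ag Act (Var ⊕ Ag)),
      SLsat G (updQ χ l f) q θ → SLsat G χ q (quantList l θ) := by
  intro l
  induction l with
  | nil => intro χ h; rwa [updQ_nil] at h
  | cons a l ih =>
      intro χ h
      rw [updQ_cons] at h
      exact ⟨f a, ih _ h⟩

lemma quantList_sat_rev (G : CGS S Ag Act AP) (q : S) (θ : SLForm AP Ag (Var ⊕ Ag))
    (hne : Nonempty (Ag → Strat S Ag Act)) :
    ∀ (l : List Ag) (χ : Assign S Ag Act (Var ⊕ Ag)), l.Nodup →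
      SLsat G χ q (quantList l θ) → ∃ f, SLsat G (updQ χ l f) q θ := by
  intro l
  induction l with
  | nil => intro χ _ h; exact ⟨hne.some, by rwa [updQ_nil]⟩
  | cons a l ih =>
      intro χ hnd h
      obtain ⟨σ, hσ⟩ := h
      obtain ⟨f, hf⟩ := ih _ (List.nodup_cons.1 hnd).2 hσ
      rw [updQ_cons' _ _ _ _ _ (List.nodup_cons.1 hnd).1] at hf
      exact ⟨_, hf⟩

lemma bindList_sat (G : CGS S Ag Act AP) (q : S) (θ : SLForm AP Ag (Var ⊕ Ag))
    (g : Ag → Strat S Ag Act) :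
    ∀ (l : List Ag) (χ : Assign S Ag Act (Var ⊕ Ag)),
      (∀ a ∈ l, χ (Sum.inr (Sum.inr a)) = some (g a)) →
      (SLsat G χ q (bindList l θ) ↔ SLsat G (agUpd χ l g) q θ) := by
  intro l
  induction l with
  | nil => intro χ _; rw [agUpd_nil]; rfl
  | cons a l ih =>
      intro χ hχ
      show SLsat G (Function.update χ (Sum.inl a) (χ (Sum.inr (Sum.inr a)))) q (bindList l θ) ↔ _
      rw [hχ a (List.mem_cons_self)]
      rw [ih _ (fun b hb => by
        rw [Function.update_of_ne (by simp)]
        exact hχ b (List.mem_cons_of_mem a hb))]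
      rw [agUpd_cons]

lemma bigUpd_sat_fwd (G : CGS S Ag Act AP) (q : S) (θ : SLForm AP Ag (Var ⊕ Ag))
    (l : List Ag) (χ : Assign S Ag Act (Var ⊕ Ag)) (f : Ag → Strat S Ag Act)
    (h : SLsat G (bigUpd χ l f) q θ) : SLsat G χ q (quantList l (bindList l θ)) := by
  apply quantList_sat_fwd G q _ f
  rw [bindList_sat G q θ f l _ (fun a ha => by simp [updQ, ha])]
  exact h

lemma bigUpd_sat_rev (G : CGS S Ag Act AP) (q : S) (θ : SLForm AP Ag (Var ⊕ Ag))
    (l : List Ag) (χ : Assign S Ag Act (Var ⊕ Ag)) (hnd : l.Nodup)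
    (hne : Nonempty (Ag → Strat S Ag Act))
    (h : SLsat G χ q (quantList l (bindList l θ))) : ∃ f, SLsat G (bigUpd χ l f) q θ := by
  obtain ⟨f, hf⟩ := quantList_sat_rev G q _ hne l χ hnd h
  refine ⟨f, ?_⟩
  rw [bindList_sat G q θ f l _ (fun a ha => by simp [updQ, ha])] at hf
  exact hf

lemma bigUpd_inl_mem (χ : Assign S Ag Act (Var ⊕ Ag)) (l : List Ag) (f : Ag → Strat S Ag Act)
    {a : Ag} (ha : a ∈ l) : bigUpd χ l f (Sum.inl a) = some (f a) := by
  simp [bigUpd, agUpd, ha]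

lemma bigUpd_inl_not_mem (χ : Assign S Ag Act (Var ⊕ Ag)) (l : List Ag)
    (f : Ag → Strat S Ag Act) {a : Ag} (ha : a ∉ l) :
    bigUpd χ l f (Sum.inl a) = χ (Sum.inl a) := by
  simp [bigUpd, agUpd, updQ, ha]

lemma bigUpd_inr_inl (χ : Assign S Ag Act (Var ⊕ Ag)) (l : List Ag)
    (f : Ag → Strat S Ag Act) (v : Var) :
    bigUpd χ l f (Sum.inr (Sum.inl v)) = χ (Sum.inr (Sum.inl v)) := by
  simp [bigUpd, agUpd, updQ]

end Aux3

section Aux4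
set_option linter.unusedSectionVars false
set_option linter.unusedVariables false
variable [DecidableEq S] [DecidableEq Ag] [DecidableEq Var]

lemma SLfree_quantList (l : List Ag) (θ : SLForm AP Ag (Var ⊕ Ag)) :
    SLfree (quantList l θ) = SLfree θ \ {x | ∃ a ∈ l, x = Sum.inr a} := by
  induction l with
  | nil => simp [quantList, SLfree]
  | cons a l ih =>
      show SLfree (.exi (Sum.inr a) (quantList l θ)) = _
      rw [show SLfree (SLForm.exi (Sum.inr a) (quantList l θ))
        = SLfree (quantList l θ) \ {Sum.inr a} from rfl, ih]
      ext x
      simp only [Set.mem_diff, Set.mem_setOf_eq, Set.mem_singleton_iff, List.mem_cons]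
      constructor
      · rintro ⟨⟨hx, hni⟩, hne⟩
        exact ⟨hx, fun ⟨b, hb, hxb⟩ => hb.elim (fun h => hne (hxb.trans (by rw [h])))
          (fun h => hni ⟨b, h, hxb⟩)⟩
      · rintro ⟨hx, hni⟩
        exact ⟨⟨hx, fun ⟨b, hb, hxb⟩ => hni ⟨b, Or.inr hb, hxb⟩⟩,
          fun h => hni ⟨a, Or.inl rfl, h⟩⟩

lemma SLfree_bindList (l : List Ag) (θ : SLForm AP Ag (Var ⊕ Ag)) :
    SLfree (bindList l θ) = SLfree θ ∪ {x | ∃ a ∈ l, x = Sum.inr a} := by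
  induction l with
  | nil => simp [bindList, SLfree]
  | cons a l ih =>
      show SLfree (.bind a (Sum.inr a) (bindList l θ)) = _
      rw [show SLfree (SLForm.bind a (Sum.inr a) (bindList l θ))
        = insert (Sum.inr a) (SLfree (bindList l θ)) from rfl, ih]
      ext x
      simp only [Set.mem_insert_iff, Set.mem_union, Set.mem_setOf_eq, List.mem_cons]
      constructor
      · rintro (h | h | ⟨b, hb, hxb⟩)
        · exact Or.inr ⟨a, Or.inl rfl, h⟩
        · exact Or.inl h
        · exact Or.inr ⟨b, Or.inr hb, hxb⟩
      · rintro (h | ⟨b, hb, hxb⟩)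
        · exact Or.inr (Or.inl h)
        · exact hb.elim (fun h => Or.inl (by rw [hxb, h])) fun h => Or.inr (Or.inr ⟨b, h, hxb⟩)

mutual
lemma SLfree_trA (A : Finset Ag) (φ : BSLForm AP Ag (Var ⊕ Ag)) :
    SLfree (trA (Var := Var) A φ) ⊆ BSLfree φ := by
  cases φ with
  | atom p => simp [trA, SLfree, BSLfree]
  | neg φ =>
      rw [show trA A (BSLForm.neg φ) = .neg (trA A φ) from rfl]
      exact (SLfree_trA A φ).trans (by rw [BSLfree])
  | or φ φ' =>
      rw [show trA A (BSLForm.or φ φ') = .or (trA A φ) (trA A φ') from rfl]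
      rw [show SLfree (SLForm.or (trA (Var := Var) A φ) (trA A φ'))
        = SLfree (trA (Var := Var) A φ) ∪ SLfree (trA A φ') from rfl]
      rw [show BSLfree (BSLForm.or φ φ') = BSLfree φ ∪ BSLfree φ' from rfl]
      exact Set.union_subset_union (SLfree_trA A φ) (SLfree_trA A φ')
  | exi x φ =>
      rw [show trA A (BSLForm.exi x φ) = .exi x (trA A φ) from rfl]
      exact Set.diff_subset_diff_left (SLfree_trA A φ)
  | bind a x φ =>
      rw [show trA A (BSLForm.bind a x φ) = .bind a x (trA (A.erase a) φ) from rfl]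
      exact Set.insert_subset_insert (SLfree_trA (A.erase a) φ)
  | unbind a φ =>
      rw [show trA A (BSLForm.unbind a φ) = trA (insert a A) φ from rfl]
      exact SLfree_trA (insert a A) φ
  | pathE ψ =>
      rw [show trA A (BSLForm.pathE ψ)
        = quantList A.toList (bindList A.toList (trAP A ψ)) from rfl]
      rw [SLfree_quantList, SLfree_bindList]
      intro x hx
      rcases hx with ⟨h1 | h2, hni⟩
      · rcases SLfree_trAP A ψ h1 with h | h
        · exact h
        · exact absurd (by
            obtain ⟨a, ha, hx⟩ := h
            exact ⟨a, Finset.mem_toList.2 ha, hx⟩) hni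
      · exact absurd (by
          obtain ⟨a, ha, hx⟩ := h2
          exact ⟨a, ha, hx⟩) hni

lemma SLfree_trAP (A : Finset Ag) (ψ : BSLPath AP Ag (Var ⊕ Ag)) :
    SLfree (trAP (Var := Var) A ψ) ⊆ BSLfreeP ψ ∪ {x | ∃ a ∈ A, x = Sum.inr a} := by
  cases ψ with
  | state φ =>
      exact (SLfree_trA A φ).trans (by rw [BSLfreeP]; exact Set.subset_union_left)
  | neg ψ => exact SLfree_trAP A ψ
  | or ψ ψ' =>
      rw [show trAP A (BSLPath.or ψ ψ') = .or (trAP A ψ) (trAP A ψ') from rfl]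
      rw [show BSLfreeP (BSLPath.or ψ ψ') = BSLfreeP ψ ∪ BSLfreeP ψ' from rfl]
      intro x hx
      rcases hx with h | h
      · rcases SLfree_trAP A ψ h with h | h
        · exact Or.inl (Or.inl h)
        · exact Or.inr h
      · rcases SLfree_trAP A ψ' h with h | h
        · exact Or.inl (Or.inr h)
        · exact Or.inr h
  | next ψ => exact SLfree_trAP A ψ
  | untl ψ ψ' =>
      rw [show trAP A (BSLPath.untl ψ ψ') = .untl (trAP A ψ) (trAP A ψ') from rfl]
      rw [show BSLfreeP (BSLPath.untl ψ ψ') = BSLfreeP ψ ∪ BSLfreeP ψ' from rfl]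
      intro x hx
      rcases hx with h | h
      · rcases SLfree_trAP A ψ h with h | h
        · exact Or.inl (Or.inl h)
        · exact Or.inr h
      · rcases SLfree_trAP A ψ' h with h | h
        · exact Or.inl (Or.inr h)
        · exact Or.inr h
end

lemma SLdefFor_quantList (B : Set Ag) (l : List Ag) (θ : SLForm AP Ag (Var ⊕ Ag)) :
    SLdefFor B (quantList l θ) ↔ SLdefFor B θ := by
  induction l with
  | nil => rfl
  | cons a l ih => exact ih

lemma SLdefFor_bindList (B : Set Ag) (l : List Ag) (θ : SLForm AP Ag (Var ⊕ Ag)) :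
    SLdefFor B (bindList l θ) ↔ SLdefFor (B ∪ {a | a ∈ l}) θ := by
  induction l generalizing B with
  | nil => rw [show (B ∪ {a | a ∈ ([] : List Ag)}) = B by simp]; rfl
  | cons a l ih =>
      show SLdefFor (insert a B) (bindList l θ) ↔ _
      rw [ih]
      rw [show insert a B ∪ {b | b ∈ l} = B ∪ {b | b ∈ a :: l} by
        ext x; simp [List.mem_cons]; tauto]

mutual
lemma SLdefFor_trA (A : Finset Ag) (φ : BSLForm AP Ag (Var ⊕ Ag)) :
    ∀ B : Set Ag, (↑A : Set Ag) ∪ B = Set.univ → SLdefFor B (trA (Var := Var) A φ) := by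
  cases φ with
  | atom p => intro B hB; trivial
  | neg φ => exact fun B hB => SLdefFor_trA A φ B hB
  | or φ φ' => exact fun B hB => ⟨SLdefFor_trA A φ B hB, SLdefFor_trA A φ' B hB⟩
  | exi x φ => exact fun B hB => SLdefFor_trA A φ B hB
  | bind a x φ =>
      intro B hB
      show SLdefFor (insert a B) (trA (A.erase a) φ)
      apply SLdefFor_trA (A.erase a) φ
      ext x
      simp only [Set.mem_union, Finset.coe_erase, Set.mem_diff, Finset.mem_coe,
        Set.mem_singleton_iff, Set.mem_insert_iff, Set.mem_univ, iff_true]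
      by_cases hxa : x = a
      · exact Or.inr (Or.inl hxa)
      · have : x ∈ (↑A : Set Ag) ∪ B := hB ▸ Set.mem_univ x
        rcases this with h | h
        · exact Or.inl ⟨h, hxa⟩
        · exact Or.inr (Or.inr h)
  | unbind a φ =>
      intro B hB
      apply SLdefFor_trA (insert a A) φ
      rw [Set.eq_univ_iff_forall]
      intro x
      have : x ∈ (↑A : Set Ag) ∪ B := hB ▸ Set.mem_univ x
      rcases this with h | h
      · exact Or.inl (by simp [h])
      · exact Or.inr h
  | pathE ψ =>
      intro B hB
      show SLdefFor B (quantList A.toList (bindList A.toList (trAP A ψ)))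
      rw [SLdefFor_quantList, SLdefFor_bindList]
      have : B ∪ {a | a ∈ A.toList} = Set.univ := by
        rw [← hB]
        ext x
        simp [Finset.mem_toList, Or.comm]
      rw [this]
      exact SLdefFor_trAP A ψ

lemma SLdefFor_trAP (A : Finset Ag) (ψ : BSLPath AP Ag (Var ⊕ Ag)) :
    SLdefFor Set.univ (trAP (Var := Var) A ψ) := by
  cases ψ with
  | state φ => exact SLdefFor_trA A φ Set.univ (Set.union_univ _)
  | neg ψ => exact SLdefFor_trAP A ψ
  | or ψ ψ' => exact ⟨SLdefFor_trAP A ψ, SLdefFor_trAP A ψ'⟩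
  | next ψ => exact ⟨rfl, SLdefFor_trAP A ψ⟩
  | untl ψ ψ' => exact ⟨rfl, SLdefFor_trAP A ψ, SLdefFor_trAP A ψ'⟩
end

end Aux4

section Aux5
set_option linter.unusedSectionVars false
set_option linter.unusedVariables false
variable [DecidableEq S] [DecidableEq Ag] [DecidableEq Var]

lemma transAssign_isSome (G : CGS S Ag Act AP) (ρ : FPath S Ag Act)
    (χ : Assign S Ag Act Var) (l : Ag ⊕ Var) :
    ((transAssign G ρ χ) l).isSome = (χ l).isSome := by
  unfold transAssign
  cases χ l <;> rfl

lemma transAssign_eq_none (G : CGS S Ag Act AP) (ρ : FPath S Ag Act)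
    (χ : Assign S Ag Act Var) (l : Ag ⊕ Var) (h : χ l = none) :
    (transAssign G ρ χ) l = none := by
  unfold transAssign
  rw [h]
  rfl

lemma transAssign_congr_at (G : CGS S Ag Act AP) (ρ : FPath S Ag Act)
    (χ χ' : Assign S Ag Act Var) (l : Ag ⊕ Var) (h : χ l = χ' l) :
    (transAssign G ρ χ) l = (transAssign G ρ χ') l := by
  unfold transAssign
  rw [h]

lemma step_iff (G : CGS S Ag Act AP) (θ : SLForm AP Ag Var) (χ : Assign S Ag Act Var)
    (q : S) (d : ℕ → Ag → Act) (i m : ℕ) :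
    SLsat G (transAssign G (prefixPath (stateAt G q d i) (fun k => d (i + k)) m)
        (transAssign G (prefixPath q d i) χ))
      (stateAt G (stateAt G q d i) (fun k => d (i + k)) m) θ
    ↔ SLsat G (transAssign G (prefixPath q d (i + m)) χ) (stateAt G q d (i + m)) θ := by
  rw [stateAt_add]
  exact SLsat_congr G θ _ _ _ (AEq_comp G q d i m χ)

mutual
theorem main_state (G : CGS S Ag Act AP) (φ : BSLForm AP Ag (Var ⊕ Ag))
    (hf : BSLavoidsFresh φ) (A : Finset Ag) (χ₁ χ₂ : Assign S Ag Act (Var ⊕ Ag))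
    (hA : ∀ a ∈ A, χ₁ (Sum.inl a) = none)
    (hAc : ∀ a ∉ A, χ₂ (Sum.inl a) = χ₁ (Sum.inl a) ∧ (χ₁ (Sum.inl a)).isSome)
    (hV : ∀ v : Var, χ₂ (Sum.inr (Sum.inl v)) = χ₁ (Sum.inr (Sum.inl v)))
    (hFV : ∀ v : Var, Sum.inl v ∈ BSLfree φ → (χ₁ (Sum.inr (Sum.inl v))).isSome)
    (q : S) :
    BSLsat G χ₁ q φ ↔ SLsat G χ₂ q (trA A φ) := by
  cases φ with
  | atom p =>
      simp only [BSLsat]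
      rw [show trA (Var := Var) A (BSLForm.atom p) = .atom p from rfl]
      simp only [SLsat]
  | neg φ =>
      simp only [BSLsat]
      rw [show trA (Var := Var) A (BSLForm.neg φ) = .neg (trA A φ) from rfl]
      simp only [SLsat]
      rw [main_state G φ hf A χ₁ χ₂ hA hAc hV hFV q]
  | or φ φ' =>
      simp only [BSLsat]
      rw [show trA (Var := Var) A (BSLForm.or φ φ') = .or (trA A φ) (trA A φ') from rfl]
      simp only [SLsat]
      rw [main_state G φ hf.1 A χ₁ χ₂ hA hAc hV
          (fun v hv => hFV v (Or.inl hv)) q,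
        main_state G φ' hf.2 A χ₁ χ₂ hA hAc hV
          (fun v hv => hFV v (Or.inr hv)) q]
  | exi x φ =>
      obtain ⟨v₀, rfl⟩ : ∃ v₀, x = Sum.inl v₀ := by
        rcases x with v | b
        · exact ⟨v, rfl⟩
        · exact absurd hf.1 (by simp)
      simp only [BSLsat]
      rw [show trA (Var := Var) A (BSLForm.exi (Sum.inl v₀) φ)
        = .exi (Sum.inl v₀) (trA A φ) from rfl]
      simp only [SLsat]
      refine exists_congr fun σ => main_state G φ hf.2 A _ _ ?_ ?_ ?_ ?_ q
      · intro a ha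
        rw [Function.update_of_ne (by simp)]
        exact hA a ha
      · intro a ha
        rw [Function.update_of_ne (by simp), Function.update_of_ne (by simp)]
        exact hAc a ha
      · intro v
        by_cases hv : v = v₀
        · subst hv
          rw [Function.update_self, Function.update_self]
        · rw [Function.update_of_ne (by simp [hv]), Function.update_of_ne (by simp [hv])]
          exact hV v
      · intro v hv
        by_cases hvv : v = v₀
        · subst hvv
          rw [Function.update_self]
          rfl
        · rw [Function.update_of_ne (by simp [hvv])]
          exact hFV v ⟨hv, by simp [hvv]⟩
  | bind a x φ =>
      obtain ⟨v₀, rfl⟩ : ∃ v₀, x = Sum.inl v₀ := by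
        rcases x with v | b
        · exact ⟨v, rfl⟩
        · exact absurd hf.1 (by simp)
      simp only [BSLsat]
      rw [show trA (Var := Var) A (BSLForm.bind a (Sum.inl v₀) φ)
        = .bind a (Sum.inl v₀) (trA (A.erase a) φ) from rfl]
      simp only [SLsat]
      rw [hV v₀]
      refine main_state G φ hf.2 (A.erase a) _ _ ?_ ?_ ?_ ?_ q
      · intro b hb
        rw [Function.update_of_ne (by simp [(Finset.mem_erase.1 hb).1])]
        exact hA b (Finset.mem_erase.1 hb).2
      · intro b hb
        by_cases hba : b = a
        · subst hba
          rw [Function.update_self, Function.update_self]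
          exact ⟨rfl, hFV v₀ (Or.inl rfl)⟩
        · have hbA : b ∉ A := fun h => hb (Finset.mem_erase.2 ⟨hba, h⟩)
          rw [Function.update_of_ne (by simp [hba]), Function.update_of_ne (by simp [hba])]
          exact hAc b hbA
      · intro v
        rw [Function.update_of_ne (by simp), Function.update_of_ne (by simp)]
        exact hV v
      · intro v hv
        rw [Function.update_of_ne (by simp)]
        exact hFV v (Or.inr hv)
  | unbind a φ =>
      simp only [BSLsat]
      rw [show trA (Var := Var) A (BSLForm.unbind a φ) = trA (insert a A) φ from rfl]
      refine main_state G φ hf (insert a A) _ _ ?_ ?_ ?_ ?_ q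
      · intro b hb
        by_cases hba : b = a
        · subst hba
          rw [Function.update_self]
        · rw [Function.update_of_ne (by simp [hba])]
          exact hA b (by simpa [hba] using hb)
      · intro b hb
        have hba : b ≠ a := fun h => hb (h ▸ Finset.mem_insert_self a A)
        rw [Function.update_of_ne (by simp [hba])]
        exact hAc b (fun h => hb (Finset.mem_insert_of_mem h))
      · intro v
        rw [Function.update_of_ne (by simp)]
        exact hV v
      · intro v hv
        rw [Function.update_of_ne (by simp)]
        exact hFV v hv
  | pathE ψ =>
      simp only [BSLsat]
      rw [show trA (Var := Var) A (BSLForm.pathE ψ)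
        = quantList A.toList (bindList A.toList (trAP A ψ)) from rfl]
      constructor
      · rintro ⟨d, hd, hsat⟩
        have hd : d ∈ outcome G q χ₁ := hd
        set f : Ag → Strat S Ag Act := fun b ρ => d ρ.2.length b with hfdef
        set χ' := bigUpd χ₂ A.toList f with hχ'
        have hAc' : ∀ a ∉ A, χ' (Sum.inl a) = χ₁ (Sum.inl a) := by
          intro a ha
          rw [hχ', bigUpd_inl_not_mem _ _ _ (fun h => ha (Finset.mem_toList.1 h))]
          exact (hAc a ha).1
        have hC' : ∀ a, (χ' (Sum.inl a)).isSome := by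
          intro a
          by_cases ha : a ∈ A
          · rw [hχ', bigUpd_inl_mem _ _ _ (Finset.mem_toList.2 ha)]
            rfl
          · rw [hAc' a ha]
            exact (hAc a ha).2
        have hd' : d ∈ outcome G q χ' := by
          intro k b σ hσ
          by_cases hb : b ∈ A
          · rw [hχ', bigUpd_inl_mem _ _ _ (Finset.mem_toList.2 hb)] at hσ
            have hfb := Option.some.inj hσ
            rw [← hfb, hfdef]
            show d k b = d (prefixPath q d k).2.length b
            simp [prefixPath]
          · refine hd k b σ ?_
            rw [← hAc' b hb]
            exact hσ
        have key := main_path G ψ hf A χ₁ χ' hA hAc'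
          (fun v => by rw [hχ', bigUpd_inr_inl]; exact hV v) hFV hC' q d hd' 0
        rw [prefixPath_zero, transAssign_nil, stateAt_zero] at key
        exact bigUpd_sat_fwd G q _ A.toList χ₂ f (key.1 hsat)
      · intro h
        have hne : Nonempty (Ag → Strat S Ag Act) := by
          cases hl : A.toList with
          | nil =>
              have hAe : A = ∅ := by rwa [← Finset.toList_eq_nil]
              exact ⟨fun a => (χ₁ (Sum.inl a)).get ((hAc a (by simp [hAe])).2)⟩
          | cons a l =>
              rw [hl] at h
              rw [show quantList (a :: l) (bindList (a :: l) (trAP (Var := Var) A ψ))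
                = .exi (Sum.inr a) (quantList l (bindList (a :: l) (trAP A ψ))) from rfl] at h
              simp only [SLsat] at h
              obtain ⟨σ, -⟩ := h
              exact ⟨fun _ => σ⟩
        obtain ⟨f, hf'⟩ := bigUpd_sat_rev G q _ A.toList χ₂ (Finset.nodup_toList A) hne h
        set χ' := bigUpd χ₂ A.toList f with hχ'
        have hAc' : ∀ a ∉ A, χ' (Sum.inl a) = χ₁ (Sum.inl a) := by
          intro a ha
          rw [hχ', bigUpd_inl_not_mem _ _ _ (fun h => ha (Finset.mem_toList.1 h))]
          exact (hAc a ha).1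
        have hC' : ∀ a, (χ' (Sum.inl a)).isSome := by
          intro a
          by_cases ha : a ∈ A
          · rw [hχ', bigUpd_inl_mem _ _ _ (Finset.mem_toList.2 ha)]
            rfl
          · rw [hAc' a ha]
            exact (hAc a ha).2
        set d := mkPlay χ' q hC' with hddef
        have hd' : d ∈ outcome G q χ' := mkPlay_mem G χ' q hC'
        have hd1 : d ∈ outcome G q χ₁ := by
          intro k b σ hσ
          have hb : b ∉ A := by
            intro hb
            rw [hA b hb] at hσ
            cases hσ
          refine hd' k b σ ?_
          rw [hAc' b hb]
          exact hσ
        have key := main_path G ψ hf A χ₁ χ' hA hAc'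
          (fun v => by rw [hχ', bigUpd_inr_inl]; exact hV v) hFV hC' q d hd' 0
        rw [prefixPath_zero, transAssign_nil, stateAt_zero] at key
        exact ⟨d, hd1, key.2 hf'⟩

theorem main_path (G : CGS S Ag Act AP) (ψ : BSLPath AP Ag (Var ⊕ Ag))
    (hf : BSLavoidsFreshP ψ) (A : Finset Ag) (χ₁ χ₂ : Assign S Ag Act (Var ⊕ Ag))
    (hA : ∀ a ∈ A, χ₁ (Sum.inl a) = none)
    (hAc : ∀ a ∉ A, χ₂ (Sum.inl a) = χ₁ (Sum.inl a))
    (hV : ∀ v : Var, χ₂ (Sum.inr (Sum.inl v)) = χ₁ (Sum.inr (Sum.inl v)))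
    (hFV : ∀ v : Var, Sum.inl v ∈ BSLfreeP ψ → (χ₁ (Sum.inr (Sum.inl v))).isSome)
    (hC : ∀ a, (χ₂ (Sum.inl a)).isSome)
    (q : S) (d : ℕ → Ag → Act) (hd : d ∈ outcome G q χ₂) (i : ℕ) :
    BSLsatP G χ₁ q d i ψ ↔
      SLsat G (transAssign G (prefixPath q d i) χ₂) (stateAt G q d i) (trAP A ψ) := by
  cases ψ with
  | state φ =>
      simp only [BSLsatP]
      rw [show trAP (Var := Var) A (BSLPath.state φ) = trA A φ from rfl]
      refine main_state G φ hf A _ _ ?_ ?_ ?_ ?_ _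
      · intro a ha
        exact transAssign_eq_none _ _ _ _ (hA a ha)
      · intro a ha
        refine ⟨transAssign_congr_at _ _ _ _ _ (hAc a ha), ?_⟩
        rw [transAssign_isSome, ← hAc a ha]
        exact hC a
      · intro v
        exact transAssign_congr_at _ _ _ _ _ (hV v)
      · intro v hv
        rw [transAssign_isSome]
        exact hFV v hv
  | neg ψ =>
      simp only [BSLsatP]
      rw [show trAP (Var := Var) A (BSLPath.neg ψ) = .neg (trAP A ψ) from rfl]
      simp only [SLsat]
      rw [main_path G ψ hf A χ₁ χ₂ hA hAc hV hFV hC q d hd i]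
  | or ψ ψ' =>
      simp only [BSLsatP]
      rw [show trAP (Var := Var) A (BSLPath.or ψ ψ') = .or (trAP A ψ) (trAP A ψ') from rfl]
      simp only [SLsat]
      rw [main_path G ψ hf.1 A χ₁ χ₂ hA hAc hV (fun v hv => hFV v (Or.inl hv)) hC q d hd i,
        main_path G ψ' hf.2 A χ₁ χ₂ hA hAc hV (fun v hv => hFV v (Or.inr hv)) hC q d hd i]
  | next ψ =>
      simp only [BSLsatP]
      rw [show trAP (Var := Var) A (BSLPath.next ψ) = .next (trAP A ψ) from rfl]
      simp only [SLsat]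
      have hmem := outcome_shift G hd i
      have hCᵢ : ∀ a, ((transAssign G (prefixPath q d i) χ₂) (Sum.inl a)).isSome := by
        intro a
        rw [transAssign_isSome]
        exact hC a
      constructor
      · intro hsat
        refine ⟨fun k => d (i + k), hmem, ?_⟩
        rw [step_iff]
        exact (main_path G ψ hf A χ₁ χ₂ hA hAc hV hFV hC q d hd (i + 1)).1 hsat
      · rintro ⟨d', hd'', hsat⟩
        obtain rfl : d' = fun k => d (i + k) := outcome_unique G hCᵢ hd'' hmem
        rw [step_iff] at hsat
        exact (main_path G ψ hf A χ₁ χ₂ hA hAc hV hFV hC q d hd (i + 1)).2 hsat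
  | untl ψ ψ' =>
      simp only [BSLsatP]
      rw [show trAP (Var := Var) A (BSLPath.untl ψ ψ') = .untl (trAP A ψ) (trAP A ψ') from rfl]
      simp only [SLsat]
      have hmem := outcome_shift G hd i
      have hCᵢ : ∀ a, ((transAssign G (prefixPath q d i) χ₂) (Sum.inl a)).isSome := by
        intro a
        rw [transAssign_isSome]
        exact hC a
      constructor
      · rintro ⟨j, hij, h1, h2⟩
        refine ⟨fun k => d (i + k), hmem, j - i, ?_, ?_⟩
        · rw [step_iff, Nat.add_sub_cancel' hij]
          exact (main_path G ψ' hf.2 A χ₁ χ₂ hA hAc hV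
            (fun v hv => hFV v (Or.inr hv)) hC q d hd j).1 h1
        · intro k hk
          rw [step_iff]
          exact (main_path G ψ hf.1 A χ₁ χ₂ hA hAc hV
            (fun v hv => hFV v (Or.inl hv)) hC q d hd (i + k)).1
            (h2 (i + k) (Nat.le_add_right i k) (by omega))
      · rintro ⟨d', hd'', j, h1, h2⟩
        obtain rfl : d' = fun k => d (i + k) := outcome_unique G hCᵢ hd'' hmem
        refine ⟨i + j, Nat.le_add_right i j, ?_, ?_⟩
        · rw [step_iff] at h1
          exact (main_path G ψ' hf.2 A χ₁ χ₂ hA hAc hV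
            (fun v hv => hFV v (Or.inr hv)) hC q d hd (i + j)).2 h1
        · intro k hik hk
          have h3 := h2 (k - i) (by omega)
          rw [step_iff, Nat.add_sub_cancel' hik] at h3
          exact (main_path G ψ hf.1 A χ₁ χ₂ hA hAc hV
            (fun v hv => hFV v (Or.inl hv)) hC q d hd k).2 h3
end

end Aux5

/-- SL and BSL are equiexpressive. For every SL sentence there is
an equivalent BSL sentence (namely `tr(φ)`), and for every BSL sentence there
is an equivalent SL sentence (namely `tr_Ag(φ)`); `G ⊨ φ` is evaluated at the
initial state under the empty assignment (irrelevant for sentences). -/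
theorem statement_8 [DecidableEq S] [DecidableEq Ag] [DecidableEq Var] [Fintype Ag] :
    (∀ φ : SLForm AP Ag Var, SLfree φ = ∅ → SLdefFor (∅ : Set Ag) φ →
      ∃ φ' : BSLForm AP Ag Var, BSLfree φ' = ∅ ∧
        ∀ G : CGS S Ag Act AP,
          (SLsat G (emptyAssign (Var := Var)) G.init φ ↔
            BSLsat G (emptyAssign (Var := Var)) G.init φ')) ∧
    (∀ φ : BSLForm AP Ag (Var ⊕ Ag), BSLfree φ = ∅ → BSLavoidsFresh φ →
      ∃ φ' : SLForm AP Ag (Var ⊕ Ag),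
        SLfree φ' = ∅ ∧ SLdefFor (∅ : Set Ag) φ' ∧
        ∀ G : CGS S Ag Act AP,
          (BSLsat G (emptyAssign (Var := Var ⊕ Ag)) G.init φ ↔
            SLsat G (emptyAssign (Var := Var ⊕ Ag)) G.init φ')) := by
  constructor
  · intro φ hfree _
    refine ⟨tr φ, by rw [BSLfree_tr, hfree], fun G => sat_tr G φ _ _⟩
  · intro φ hfree havf
    refine ⟨trA Finset.univ φ, ?_, ?_, fun G => ?_⟩
    · exact Set.subset_empty_iff.1 (hfree ▸ SLfree_trA Finset.univ φ)
    · exact SLdefFor_trA Finset.univ φ ∅ (by simp)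
    · refine main_state G φ havf Finset.univ emptyAssign emptyAssign
        (fun a _ => rfl) (fun a ha => absurd (Finset.mem_univ a) ha)
        (fun v => rfl) (fun v hv => absurd (hfree ▸ hv) (Set.notMem_empty _)) G.init
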